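/- For every natural number k and real x with -1 < x ≤ 1, the identity U_k(x) = (√2 / (2·√(1+x))) · U_{2k+1}(√((1+x)/2)) holds. -/

import Mathlib

open Polynomial Polynomial.Chebyshev

lemma aux_U (y : ℝ) (k : ℕ) :
    (U ℝ (2 * (k : ℤ) + 1)).eval y = 2 * y * (U ℝ (k : ℤ)).eval (2 * y ^ 2 - 1) := by
  induction k using Nat.twoStepInduction with
  | zero => simp [U_one]
  | one =>
    have h3 : U ℝ 3 = 2 * X * U ℝ 2 - U ℝ 1 := by simpa using U_add_two ℝ 1
    norm_num [h3, U_two, U_one]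
    ring
  | more n ih1 ih2 =>
    have e1 := congrArg (eval y) (U_add_two ℝ (2 * (n : ℤ) + 1))
    have e2 := congrArg (eval y) (U_add_two ℝ (2 * (n : ℤ) + 2))
    have e3 := congrArg (eval y) (U_add_two ℝ (2 * (n : ℤ) + 3))
    have e4 := congrArg (eval (2 * y ^ 2 - 1)) (U_add_two ℝ (n : ℤ))
    simp only [eval_sub, eval_mul, eval_ofNat, eval_X] at e1 e2 e3 e4
    rw [show (2 * (n : ℤ) + 1 + 2) = 2 * (n : ℤ) + 3 by ring,
        show (2 * (n : ℤ) + 1 + 1) = 2 * (n : ℤ) + 2 by ring] at e1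
    rw [show (2 * (n : ℤ) + 2 + 2) = 2 * (n : ℤ) + 4 by ring,
        show (2 * (n : ℤ) + 2 + 1) = 2 * (n : ℤ) + 3 by ring] at e2
    rw [show (2 * (n : ℤ) + 3 + 2) = 2 * (n : ℤ) + 5 by ring,
        show (2 * (n : ℤ) + 3 + 1) = 2 * (n : ℤ) + 4 by ring] at e3
    push_cast at ih1 ih2 ⊢
    rw [show (2 * ((n : ℤ) + 2) + 1) = 2 * (n : ℤ) + 5 by ring]
    rw [show (2 * ((n : ℤ) + 1) + 1) = 2 * (n : ℤ) + 3 by ring] at ih2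
    linear_combination e3 + 2 * y * e2 + e1 - 2 * y * e4 + (4 * y ^ 2 - 2) * ih2 - ih1

theorem stmt_4 (k : ℕ) (x : ℝ) (h1 : -1 < x) (h2 : x ≤ 1) :
    (U ℝ (k : ℤ)).eval x =
      (Real.sqrt 2 / (2 * Real.sqrt (1 + x))) *
        (U ℝ (2 * (k : ℤ) + 1)).eval (Real.sqrt ((1 + x) / 2)) := by
  set y := Real.sqrt ((1 + x) / 2) with hy
  have hx : (0:ℝ) < 1 + x := by linarith
  have hy2 : y ^ 2 = (1 + x) / 2 := Real.sq_sqrt (by linarith)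
  rw [aux_U y k]
  have hxy : 2 * y ^ 2 - 1 = x := by rw [hy2]; ring
  rw [hxy]
  have hmul : Real.sqrt 2 * y = Real.sqrt (1 + x) := by
    rw [hy, ← Real.sqrt_mul (by norm_num : (0:ℝ) ≤ 2)]
    congr 1
    ring
  have hsx : Real.sqrt (1 + x) ≠ 0 := ne_of_gt (Real.sqrt_pos.mpr hx)
  have hcoef : Real.sqrt 2 / (2 * Real.sqrt (1 + x)) * (2 * y) = 1 := by
    field_simp
    linear_combination hmul
  rw [show Real.sqrt 2 / (2 * Real.sqrt (1 + x)) * (2 * y * (U ℝ (k:ℤ)).eval x)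
      = (Real.sqrt 2 / (2 * Real.sqrt (1 + x)) * (2 * y)) * (U ℝ (k:ℤ)).eval x by ring,
    hcoef, one_mul]
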